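/- arXiv:2512.17272 — 4 statements merged into one kernel-verified Lean document; each statement's English description precedes it below -/
import Mathlib

section
/- Let v = (v₁,v₂) : [0,1] → ℂ² be square integrable, and set c₁ = ∫₀¹|v₁(x)|²dx, c₂ = ∫₀¹|v₂(x)|²dx, c₁₂ = ∫₀¹ v₁(x)·conj(v₂(x)) dx, ‖v‖² = c₁ + c₂, and β₀ = (c₁ − c₂)² + 4|c₁₂|². Then the matrix 𝒱 = ∫₀¹ V(v(x))² dx is block diagonal: its (1,1) entry is c₁ + c₂, its lower-right 2×2 block is the Hermitian matrix with entries γ₁₁ = c₁, γ₁₂ = c₁₂, γ₂₁ = conj(c₁₂), γ₂₂ = c₂, and all other entries vanish. Moreover the eigenvalues of 𝒱 are β₃ = ‖v‖², β₂ = (‖v‖² + √β₀)/2 and β₁ = (‖v‖² − √β₀)/2, and they satisfy 0 ≤ β₁ ≤ β₂ ≤ β₃. -/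
open MeasureTheory Complex Matrix

noncomputable section

/-- The 3×3 matrix `V(a) = [[0, a*],[a, 0]]` for `a = (a₁,a₂) ∈ ℂ²`. -/
def Vmat (a₁ a₂ : ℂ) : Matrix (Fin 3) (Fin 3) ℂ :=
  !![0, (starRingEnd ℂ) a₁, (starRingEnd ℂ) a₂; a₁, 0, 0; a₂, 0, 0]

lemma Vsq (a b : ℂ) : Vmat a b * Vmat a b =
    !![(starRingEnd ℂ) a * a + (starRingEnd ℂ) b * b, 0, 0;
       0, a * (starRingEnd ℂ) a, a * (starRingEnd ℂ) b;
       0, b * (starRingEnd ℂ) a, b * (starRingEnd ℂ) b] := by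
  ext i j
  fin_cases i <;> fin_cases j <;>
    simp [Vmat, Matrix.mul_apply, Fin.sum_univ_three, Matrix.vecHead, Matrix.vecTail]

lemma conj_mul_self' (z : ℂ) : (starRingEnd ℂ) z * z = ((‖z‖ ^ 2 : ℝ) : ℂ) := by
  rw [mul_comm, Complex.mul_conj, Complex.normSq_eq_norm_sq]

/-- For square-integrable `v = (v₁,v₂) : [0,1] → ℂ²`, the matrix `𝒱 = ∫₀¹ V(v(x))² dx`
is block diagonal with (1,1)-entry `c₁ + c₂` and lower-right 2×2 block
`[[c₁, c₁₂],[conj c₁₂, c₂]]`; its eigenvalues are `β₃ = ‖v‖²`, `β₂ = (‖v‖² + √β₀)/2`,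
`β₁ = (‖v‖² − √β₀)/2`, and `0 ≤ β₁ ≤ β₂ ≤ β₃`. -/
theorem statement2 (v₁ v₂ : ℝ → ℂ)
    (hv₁ : MemLp v₁ 2 (volume.restrict (Set.Ioc (0:ℝ) 1)))
    (hv₂ : MemLp v₂ 2 (volume.restrict (Set.Ioc (0:ℝ) 1)))
    (c₁ c₂ : ℝ) (c₁₂ : ℂ) (β₀ β₁ β₂ β₃ : ℝ)
    (hc₁ : c₁ = ∫ x in (0:ℝ)..1, ‖v₁ x‖ ^ 2)
    (hc₂ : c₂ = ∫ x in (0:ℝ)..1, ‖v₂ x‖ ^ 2)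
    (hc₁₂ : c₁₂ = ∫ x in (0:ℝ)..1, v₁ x * (starRingEnd ℂ) (v₂ x))
    (hβ₀ : β₀ = (c₁ - c₂) ^ 2 + 4 * ‖c₁₂‖ ^ 2)
    (hβ₃ : β₃ = c₁ + c₂)
    (hβ₂ : β₂ = ((c₁ + c₂) + Real.sqrt β₀) / 2)
    (hβ₁ : β₁ = ((c₁ + c₂) - Real.sqrt β₀) / 2)
    (𝒱 : Matrix (Fin 3) (Fin 3) ℂ)
    (h𝒱 : ∀ i j, 𝒱 i j = ∫ x in (0:ℝ)..1, (Vmat (v₁ x) (v₂ x) * Vmat (v₁ x) (v₂ x)) i j) :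
    𝒱 = !![((c₁ : ℂ) + (c₂ : ℂ)), 0, 0;
           0, (c₁ : ℂ), c₁₂;
           0, (starRingEnd ℂ) c₁₂, (c₂ : ℂ)] ∧
    spectrum ℂ 𝒱 = {((β₃ : ℝ) : ℂ), ((β₂ : ℝ) : ℂ), ((β₁ : ℝ) : ℂ)} ∧
    0 ≤ β₁ ∧ β₁ ≤ β₂ ∧ β₂ ≤ β₃ := by
  set μ := volume.restrict (Set.Ioc (0:ℝ) 1) with hμ
  -- products of L² functions are integrable
  have hIP : ∀ (f g : ℝ → ℂ), MemLp f 2 μ → MemLp g 2 μ →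
      Integrable (fun x => (starRingEnd ℂ) (f x) * g x) μ := by
    intro f g hf hg
    have h := MeasureTheory.L2.integrable_inner (𝕜 := ℂ) (hf.toLp f) (hg.toLp g)
    refine h.congr ?_
    filter_upwards [hf.coeFn_toLp, hg.coeFn_toLp] with x h1 h2
    rw [RCLike.inner_apply', h1, h2]
  -- values of the inner products
  have hsq : ∀ (f : ℝ → ℂ) (hf : MemLp f 2 μ),
      (inner ℂ (hf.toLp f) (hf.toLp f) : ℂ) = ((∫ x, ‖f x‖ ^ 2 ∂μ : ℝ) : ℂ) := by
    intro f hf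
    rw [MeasureTheory.L2.inner_def,
      show ((∫ x, ‖f x‖ ^ 2 ∂μ : ℝ) : ℂ) = RCLike.ofReal (K := ℂ) (∫ x, ‖f x‖ ^ 2 ∂μ) from rfl,
      ← integral_ofReal (𝕜 := ℂ)]
    refine integral_congr_ae ?_
    filter_upwards [hf.coeFn_toLp] with x hx
    rw [RCLike.inner_apply', hx, conj_mul_self']
    rfl
  have hc₁' : c₁ = ∫ x, ‖v₁ x‖ ^ 2 ∂μ := by
    rw [hc₁, intervalIntegral.integral_of_le zero_le_one]
  have hc₂' : c₂ = ∫ x, ‖v₂ x‖ ^ 2 ∂μ := by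
    rw [hc₂, intervalIntegral.integral_of_le zero_le_one]
  have hc₁₂' : c₁₂ = ∫ x, v₁ x * (starRingEnd ℂ) (v₂ x) ∂μ := by
    rw [hc₁₂, intervalIntegral.integral_of_le zero_le_one]
  have hF : ‖hv₁.toLp v₁‖ ^ 2 = c₁ := by
    rw [InnerProductSpace.norm_sq_eq_re_inner (𝕜 := ℂ), hsq v₁ hv₁, ← hc₁']
    simp
  have hG : ‖hv₂.toLp v₂‖ ^ 2 = c₂ := by
    rw [InnerProductSpace.norm_sq_eq_re_inner (𝕜 := ℂ), hsq v₂ hv₂, ← hc₂']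
    simp
  have hc₁nn : 0 ≤ c₁ := hF ▸ sq_nonneg _
  have hc₂nn : 0 ≤ c₂ := hG ▸ sq_nonneg _
  have hGF : (inner ℂ (hv₂.toLp v₂) (hv₁.toLp v₁) : ℂ) = c₁₂ := by
    rw [MeasureTheory.L2.inner_def, hc₁₂']
    refine integral_congr_ae ?_
    filter_upwards [hv₁.coeFn_toLp, hv₂.coeFn_toLp] with x h1 h2
    rw [RCLike.inner_apply', h1, h2, mul_comm]
  -- Cauchy–Schwarz
  have hCS : ‖c₁₂‖ ^ 2 ≤ c₁ * c₂ := by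
    have h := norm_inner_le_norm (𝕜 := ℂ) (hv₂.toLp v₂) (hv₁.toLp v₁)
    rw [hGF] at h
    have h' : ‖c₁₂‖ ≤ ‖hv₂.toLp v₂‖ * ‖hv₁.toLp v₁‖ := by
      exact h
    nlinarith [norm_nonneg (hv₂.toLp v₂), norm_nonneg (hv₁.toLp v₁),
      norm_nonneg c₁₂]
  -- the matrix equality
  have int_sq : ∀ (f : ℝ → ℂ), MemLp f 2 μ →
      ∫ x, (starRingEnd ℂ) (f x) * f x ∂μ = ((∫ x, ‖f x‖ ^ 2 ∂μ : ℝ) : ℂ) := by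
    intro f hf
    rw [show ((∫ x, ‖f x‖ ^ 2 ∂μ : ℝ) : ℂ) = RCLike.ofReal (K := ℂ) (∫ x, ‖f x‖ ^ 2 ∂μ) from rfl,
      ← integral_ofReal (𝕜 := ℂ)]
    refine integral_congr_ae (Filter.Eventually.of_forall fun x => ?_)
    show (starRingEnd ℂ) (f x) * f x = RCLike.ofReal (K := ℂ) (‖f x‖ ^ 2)
    rw [conj_mul_self']
    rfl
  have hMat : 𝒱 = !![((c₁ : ℂ) + (c₂ : ℂ)), 0, 0;
           0, (c₁ : ℂ), c₁₂;
           0, (starRingEnd ℂ) c₁₂, (c₂ : ℂ)] := by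
    have e00 : (∫ x in (0:ℝ)..1,
        ((starRingEnd ℂ) (v₁ x) * v₁ x + (starRingEnd ℂ) (v₂ x) * v₂ x)) = (c₁ : ℂ) + c₂ := by
      rw [intervalIntegral.integral_of_le zero_le_one,
        integral_add (hIP v₁ v₁ hv₁ hv₁) (hIP v₂ v₂ hv₂ hv₂),
        int_sq v₁ hv₁, int_sq v₂ hv₂, ← hc₁', ← hc₂']
    have e11 : (∫ x in (0:ℝ)..1, v₁ x * (starRingEnd ℂ) (v₁ x)) = (c₁ : ℂ) := by
      rw [intervalIntegral.integral_of_le zero_le_one]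
      rw [show (fun x => v₁ x * (starRingEnd ℂ) (v₁ x))
          = fun x => (starRingEnd ℂ) (v₁ x) * v₁ x from funext fun x => mul_comm _ _,
        int_sq v₁ hv₁, ← hc₁']
    have e22 : (∫ x in (0:ℝ)..1, v₂ x * (starRingEnd ℂ) (v₂ x)) = (c₂ : ℂ) := by
      rw [intervalIntegral.integral_of_le zero_le_one]
      rw [show (fun x => v₂ x * (starRingEnd ℂ) (v₂ x))
          = fun x => (starRingEnd ℂ) (v₂ x) * v₂ x from funext fun x => mul_comm _ _,
        int_sq v₂ hv₂, ← hc₂']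
    have e12 : (∫ x in (0:ℝ)..1, v₁ x * (starRingEnd ℂ) (v₂ x)) = c₁₂ := hc₁₂.symm
    have e21 : (∫ x in (0:ℝ)..1, v₂ x * (starRingEnd ℂ) (v₁ x)) = (starRingEnd ℂ) c₁₂ := by
      rw [hc₁₂, intervalIntegral.integral_of_le zero_le_one,
        intervalIntegral.integral_of_le zero_le_one, ← integral_conj]
      refine integral_congr_ae (Filter.Eventually.of_forall fun x => ?_)
      simp [mul_comm]
    ext i j
    rw [h𝒱 i j]
    simp only [Vsq]
    fin_cases i <;> fin_cases j <;>
      simp only [Matrix.cons_val', Matrix.cons_val_zero, Matrix.cons_val_one, Matrix.head_cons,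
        Matrix.empty_val', Matrix.cons_val_fin_one, Matrix.head_fin_const, Matrix.of_apply,
        Matrix.cons_val_two, Matrix.tail_cons, Fin.isValue, Fin.zero_eta, Fin.mk_one] <;>
      first
        | exact e00
        | exact e11
        | exact e22
        | exact e12
        | exact e21
        | exact intervalIntegral.integral_zero
  refine ⟨hMat, ?_, ?_, ?_, ?_⟩
  · -- spectrum
    have hβ₀nn : 0 ≤ β₀ := by rw [hβ₀]; positivity
    have hsqβ₀ : Real.sqrt β₀ ^ 2 = β₀ := Real.sq_sqrt hβ₀nn
    have h1r : β₂ + β₁ = c₁ + c₂ := by rw [hβ₁, hβ₂]; ring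
    have h2r : β₂ * β₁ = c₁ * c₂ - ‖c₁₂‖ ^ 2 := by
      rw [hβ₁, hβ₂]
      linear_combination (-1/4 : ℝ) * hsqβ₀ + (-1/4 : ℝ) * hβ₀
    have h1 : ((β₂ : ℝ) : ℂ) + ((β₁ : ℝ) : ℂ) = ((c₁ : ℝ) : ℂ) + ((c₂ : ℝ) : ℂ) := by
      exact_mod_cast congrArg Complex.ofReal h1r
    have h2 : ((β₂ : ℝ) : ℂ) * ((β₁ : ℝ) : ℂ)
        = ((c₁ : ℝ) : ℂ) * ((c₂ : ℝ) : ℂ) - ((‖c₁₂‖ ^ 2 : ℝ) : ℂ) := by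
      exact_mod_cast congrArg Complex.ofReal h2r
    have h3 : c₁₂ * (starRingEnd ℂ) c₁₂ = ((‖c₁₂‖ ^ 2 : ℝ) : ℂ) := by
      rw [Complex.mul_conj, Complex.normSq_eq_norm_sq]
    have h4 : ((β₃ : ℝ) : ℂ) = ((c₁ : ℝ) : ℂ) + ((c₂ : ℝ) : ℂ) := by
      exact_mod_cast congrArg Complex.ofReal hβ₃
    have hquad : ∀ x : ℂ, (x - (c₁ : ℂ)) * (x - (c₂ : ℂ)) - c₁₂ * (starRingEnd ℂ) c₁₂
        = (x - ((β₂ : ℝ) : ℂ)) * (x - ((β₁ : ℝ) : ℂ)) := by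
      intro x
      rw [h3]
      linear_combination x * h1 - h2
    rw [hMat]
    ext x
    rw [spectrum.mem_iff, Matrix.isUnit_iff_isUnit_det, isUnit_iff_ne_zero, not_not]
    have hent : (algebraMap ℂ (Matrix (Fin 3) (Fin 3) ℂ)) x -
        !![((c₁ : ℂ) + (c₂ : ℂ)), 0, 0; 0, (c₁ : ℂ), c₁₂; 0, (starRingEnd ℂ) c₁₂, (c₂ : ℂ)]
        = !![x - ((c₁ : ℂ) + (c₂ : ℂ)), 0, 0;
             0, x - (c₁ : ℂ), -c₁₂;
             0, -(starRingEnd ℂ) c₁₂, x - (c₂ : ℂ)] := by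
      ext i j
      fin_cases i <;> fin_cases j <;>
        simp [Algebra.algebraMap_eq_smul_one, Matrix.smul_apply, Matrix.one_apply,
          Matrix.vecHead, Matrix.vecTail]
    have hdet : ((algebraMap ℂ (Matrix (Fin 3) (Fin 3) ℂ)) x -
        !![((c₁ : ℂ) + (c₂ : ℂ)), 0, 0; 0, (c₁ : ℂ), c₁₂; 0, (starRingEnd ℂ) c₁₂, (c₂ : ℂ)]).det
        = (x - ((β₃ : ℝ) : ℂ)) * ((x - ((β₂ : ℝ) : ℂ)) * (x - ((β₁ : ℝ) : ℂ))) := by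
      rw [hent, Matrix.det_fin_three]
      simp only [Matrix.cons_val', Matrix.cons_val_zero, Matrix.cons_val_one, Matrix.head_cons,
        Matrix.empty_val', Matrix.cons_val_fin_one, Matrix.head_fin_const, Matrix.of_apply,
        Matrix.cons_val_two, Matrix.tail_cons]
      rw [← hquad x, h4]
      ring
    rw [hdet]
    simp [mul_eq_zero, sub_eq_zero]
  · -- 0 ≤ β₁
    have hle : β₀ ≤ (c₁ + c₂) ^ 2 := by rw [hβ₀]; nlinarith
    have hs : Real.sqrt β₀ ≤ c₁ + c₂ := by
      calc Real.sqrt β₀ ≤ Real.sqrt ((c₁ + c₂) ^ 2) := Real.sqrt_le_sqrt hle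
        _ = c₁ + c₂ := Real.sqrt_sq (by linarith)
    rw [hβ₁]; linarith
  · rw [hβ₁, hβ₂]
    have := Real.sqrt_nonneg β₀
    linarith
  · have hle : β₀ ≤ (c₁ + c₂) ^ 2 := by rw [hβ₀]; nlinarith
    have hs : Real.sqrt β₀ ≤ c₁ + c₂ := by
      calc Real.sqrt β₀ ≤ Real.sqrt ((c₁ + c₂) ^ 2) := Real.sqrt_le_sqrt hle
        _ = c₁ + c₂ := Real.sqrt_sq (by linarith)
    rw [hβ₂, hβ₃]; linarith
end
end

section
/- Let v : [0,1] → ℂ² be integrable and λ ∈ ℂ. Then the Picard iterates satisfy, for every n ≥ 0 and x ∈ [0,1], the bound ‖yₙ(x,λ)‖ ≤ e^{x|Im λ|} · (∫₀ˣ |v(s)| ds)ⁿ / n!. Consequently, if v is square integrable with L²-norm ‖v‖, then ‖yₙ(x,λ)‖ ≤ e^{x|Im λ|} ‖v‖ⁿ / n!, the series y(x,λ) = Σ_{n≥0} yₙ(x,λ) converges absolutely, and ‖y(x,λ)‖ ≤ e^{x|Im λ| + ‖v‖}. -/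
open MeasureTheory Complex Matrix

attribute [local instance] Matrix.normedAddCommGroup Matrix.normedSpace

set_option synthInstance.maxHeartbeats 1000000
set_option maxHeartbeats 1000000

noncomputable section

/-- `J = diag(1,-1,-1)`. -/
def Jmat : Matrix (Fin 3) (Fin 3) ℂ := Matrix.diagonal ![1, -1, -1]

/-- Operator norm of a 3×3 complex matrix, acting on Euclidean `ℂ³`. -/
def opNorm (A : Matrix (Fin 3) (Fin 3) ℂ) : ℝ :=
  ‖Matrix.toEuclideanCLM (𝕜 := ℂ) (n := Fin 3) A‖

lemma opNorm_nonneg (A) : 0 ≤ opNorm A := norm_nonneg _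

lemma opNorm_mul_le (A B) : opNorm (A * B) ≤ opNorm A * opNorm B := by
  unfold opNorm
  rw [_root_.map_mul]
  exact norm_mul_le _ _

lemma opNorm_smul (c : ℂ) (A) : opNorm (c • A) = ‖c‖ * opNorm A := by
  unfold opNorm
  rw [_root_.map_smul]
  exact norm_smul c (Matrix.toEuclideanCLM (𝕜 := ℂ) (n := Fin 3) A)

lemma euclidean_apply (A : Matrix (Fin 3) (Fin 3) ℂ) (x : EuclideanSpace ℂ (Fin 3)) (i : Fin 3) :
    (Matrix.toEuclideanCLM (𝕜 := ℂ) (n := Fin 3) A) x i = (A *ᵥ (WithLp.equiv 2 _ x)) i := by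
  rfl

lemma opNorm_le_of_bound (A : Matrix (Fin 3) (Fin 3) ℂ) {C : ℝ} (hC : 0 ≤ C)
    (h : ∀ x : EuclideanSpace ℂ (Fin 3),
      ∑ i, ‖(A *ᵥ (WithLp.equiv 2 _ x)) i‖ ^ 2 ≤ C ^ 2 * ∑ i, ‖x i‖ ^ 2) :
    opNorm A ≤ C := by
  refine ContinuousLinearMap.opNorm_le_bound _ hC fun x => ?_
  have h1 : ‖(Matrix.toEuclideanCLM (𝕜 := ℂ) (n := Fin 3) A) x‖
      = Real.sqrt (∑ i, ‖(A *ᵥ (WithLp.equiv 2 _ x)) i‖ ^ 2) := by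
    rw [EuclideanSpace.norm_eq]
    simp only [euclidean_apply]
  have h2 : ‖x‖ = Real.sqrt (∑ i, ‖x i‖ ^ 2) := by rw [EuclideanSpace.norm_eq]
  rw [h1, h2, ← Real.sqrt_sq hC, ← Real.sqrt_mul (sq_nonneg C)]
  exact Real.sqrt_le_sqrt (h x)

lemma opNorm_diagonal_le (d : Fin 3 → ℂ) {C : ℝ} (hC : 0 ≤ C) (h : ∀ i, ‖d i‖ ≤ C) :
    opNorm (Matrix.diagonal d) ≤ C := by
  refine opNorm_le_of_bound _ hC fun x => ?_
  rw [Finset.mul_sum]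
  refine Finset.sum_le_sum fun i _ => ?_
  rw [Matrix.mulVec_diagonal]
  have : ‖d i * (WithLp.equiv 2 (Fin 3 → ℂ)) x i‖ ≤ C * ‖x i‖ := by
    rw [norm_mul]
    exact mul_le_mul_of_nonneg_right (h i) (norm_nonneg _)
  calc ‖d i * (WithLp.equiv 2 (Fin 3 → ℂ)) x i‖ ^ 2 ≤ (C * ‖x i‖) ^ 2 := by
        exact pow_le_pow_left₀ (norm_nonneg _) this 2
    _ = C ^ 2 * ‖x i‖ ^ 2 := by ring

lemma opNorm_J_le : opNorm Jmat ≤ 1 := by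
  refine opNorm_diagonal_le _ zero_le_one fun i => ?_
  fin_cases i <;> simp

lemma smul_Jmat (c : ℂ) : c • Jmat = Matrix.diagonal ![c, -c, -c] := by
  unfold Jmat
  rw [← Matrix.diagonal_smul]
  congr 1
  funext i
  fin_cases i <;> simp

lemma opNorm_exp_smul_J (c : ℂ) :
    opNorm (NormedSpace.exp (c • Jmat)) ≤ Real.exp |c.re| := by
  rw [smul_Jmat, Matrix.exp_diagonal]
  refine opNorm_diagonal_le _ (Real.exp_nonneg _) fun i => ?_
  rw [Pi.coe_exp, ← Complex.exp_eq_exp_ℂ]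
  have habs : ∀ z : ℂ, ‖Complex.exp z‖ = Real.exp z.re := fun z => Complex.norm_exp z
  fin_cases i
  · rw [habs]
    exact Real.exp_le_exp.2 (le_abs_self _)
  · show ‖Complex.exp (-c)‖ ≤ _
    rw [habs]
    refine Real.exp_le_exp.2 ?_
    simpa using neg_le_abs c.re
  · show ‖Complex.exp (-c)‖ ≤ _
    rw [habs]
    refine Real.exp_le_exp.2 ?_
    simpa using neg_le_abs c.re

lemma opNorm_V_le (a₁ a₂ : ℂ) :
    opNorm (Vmat a₁ a₂) ≤ Real.sqrt (‖a₁‖ ^ 2 + ‖a₂‖ ^ 2) := by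
  refine opNorm_le_of_bound _ (Real.sqrt_nonneg _) fun x => ?_
  rw [Real.sq_sqrt (by positivity)]
  set u : Fin 3 → ℂ := (WithLp.equiv 2 (Fin 3 → ℂ)) x with hu
  have hux : ∀ i, u i = x i := fun i => rfl
  have h0 : (Vmat a₁ a₂ *ᵥ u) 0 = (starRingEnd ℂ) a₁ * u 1 + (starRingEnd ℂ) a₂ * u 2 := by
    simp [Vmat, Matrix.mulVec, dotProduct, Fin.sum_univ_three]
  have h1 : (Vmat a₁ a₂ *ᵥ u) 1 = a₁ * u 0 := by
    simp [Vmat, Matrix.mulVec, dotProduct, Fin.sum_univ_three]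
  have h2 : (Vmat a₁ a₂ *ᵥ u) 2 = a₂ * u 0 := by
    simp [Vmat, Matrix.mulVec, dotProduct, Fin.sum_univ_three]
  rw [Fin.sum_univ_three, Fin.sum_univ_three, h0, h1, h2]
  simp only [← hux]
  have hb : ‖(starRingEnd ℂ) a₁ * u 1 + (starRingEnd ℂ) a₂ * u 2‖ ≤ ‖a₁‖ * ‖u 1‖ + ‖a₂‖ * ‖u 2‖ := by
    refine (norm_add_le _ _).trans ?_
    rw [norm_mul, norm_mul, RCLike.norm_conj, RCLike.norm_conj]
  have hb2 : ‖(starRingEnd ℂ) a₁ * u 1 + (starRingEnd ℂ) a₂ * u 2‖ ^ 2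
      ≤ (‖a₁‖ * ‖u 1‖ + ‖a₂‖ * ‖u 2‖) ^ 2 := pow_le_pow_left₀ (norm_nonneg _) hb 2
  rw [norm_mul, norm_mul]
  nlinarith [sq_nonneg (‖a₁‖ * ‖u 2‖ - ‖a₂‖ * ‖u 1‖), norm_nonneg (u 0), norm_nonneg (u 1),
    norm_nonneg (u 2), norm_nonneg a₁, norm_nonneg a₂, sq_nonneg (‖u 0‖)]

def Elin : Matrix (Fin 3) (Fin 3) ℂ ≃ₗ[ℂ] (EuclideanSpace ℂ (Fin 3) →L[ℂ] EuclideanSpace ℂ (Fin 3)) where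
  toFun := fun A => Matrix.toEuclideanCLM (𝕜 := ℂ) (n := Fin 3) A
  invFun := fun T => (Matrix.toEuclideanCLM (𝕜 := ℂ) (n := Fin 3)).symm T
  left_inv := fun A => StarAlgEquiv.symm_apply_apply _ _
  right_inv := fun T => StarAlgEquiv.apply_symm_apply _ _
  map_add' := fun A B => map_add _ _ _
  map_smul' := fun c A => _root_.map_smul _ c A

def Ecl : Matrix (Fin 3) (Fin 3) ℂ ≃L[ℂ] (EuclideanSpace ℂ (Fin 3) →L[ℂ] EuclideanSpace ℂ (Fin 3)) :=
  LinearEquiv.toContinuousLinearEquiv Elin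

def EclL : Matrix (Fin 3) (Fin 3) ℂ →L[ℂ] (EuclideanSpace ℂ (Fin 3) →L[ℂ] EuclideanSpace ℂ (Fin 3)) :=
  Ecl.toContinuousLinearMap

lemma opNorm_eq_Ecl (A : Matrix (Fin 3) (Fin 3) ℂ) : opNorm A = ‖Ecl A‖ := rfl

instance matContinuousENorm : ContinuousENorm (Matrix (Fin 3) (Fin 3) ℂ) :=
  SeminormedAddGroup.toContinuousENorm

lemma opNorm_integral_le {x : ℝ} (hx : 0 ≤ x) (f : ℝ → Matrix (Fin 3) (Fin 3) ℂ) (g : ℝ → ℝ)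
    (hg : IntegrableOn g (Set.Ioc 0 x)) (hfg : ∀ s ∈ Set.Ioc (0:ℝ) x, opNorm (f s) ≤ g s) :
    opNorm (∫ s in (0:ℝ)..x, f s) ≤ ∫ s in (0:ℝ)..x, g s := by
  rw [intervalIntegral.integral_of_le hx, intervalIntegral.integral_of_le hx]
  have hg0 : (0:ℝ) ≤ ∫ s in Set.Ioc (0:ℝ) x, g s :=
    setIntegral_nonneg measurableSet_Ioc fun s hs => (opNorm_nonneg _).trans (hfg s hs)
  by_cases hf : IntegrableOn f (Set.Ioc 0 x)
  · have hcomm : EclL (∫ s in Set.Ioc (0:ℝ) x, f s)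
        = ∫ s in Set.Ioc (0:ℝ) x, EclL (f s) :=
      (ContinuousLinearMap.integral_comp_comm _ hf).symm
    have h1 : opNorm (∫ s in Set.Ioc (0:ℝ) x, f s)
        = ‖∫ s in Set.Ioc (0:ℝ) x, EclL (f s)‖ := by
      rw [opNorm_eq_Ecl, ← hcomm]; rfl
    rw [h1]
    refine (norm_integral_le_integral_norm _).trans ?_
    refine integral_mono_of_nonneg (ae_of_all _ fun s => norm_nonneg _) hg ?_
    refine (ae_restrict_iff' measurableSet_Ioc).2 (ae_of_all _ fun s hs => ?_)
    exact hfg s hs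
  · rw [integral_undef hf]
    simpa [opNorm] using hg0

lemma summable_and_opNorm_tsum_le (f : ℕ → Matrix (Fin 3) (Fin 3) ℂ) (c : ℕ → ℝ)
    (hc : Summable c) (h : ∀ n, opNorm (f n) ≤ c n) :
    Summable (fun n => opNorm (f n)) ∧ opNorm (∑' n, f n) ≤ ∑' n, c n := by
  have hnorm : Summable (fun n => ‖EclL (f n)‖) :=
    hc.of_nonneg_of_le (fun n => norm_nonneg _) h
  have hsE : Summable (fun n => EclL (f n)) := hnorm.of_norm
  have hsf : Summable f := by
    have := hsE.map (Ecl.symm : _ →L[ℂ] Matrix (Fin 3) (Fin 3) ℂ) (Ecl.symm.continuous)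
    have heq : (⇑(Ecl.symm : _ →L[ℂ] Matrix (Fin 3) (Fin 3) ℂ) ∘ fun n => EclL (f n)) = f := by
      funext n
      simp [EclL]
    rwa [heq] at this
  have hmap : EclL (∑' n, f n) = ∑' n, EclL (f n) := hsf.map_tsum EclL EclL.continuous
  constructor
  · exact hnorm
  · rw [opNorm_eq_Ecl]
    show ‖EclL (∑' n, f n)‖ ≤ _
    rw [hmap]
    exact (norm_tsum_le_tsum_norm hnorm).trans (Summable.tsum_le_tsum h hnorm hc)

section Scalar
open Set



variable {w : ℝ → ℝ}

lemma hwab (hw : IntegrableOn w (Ioc (0:ℝ) 1)) {a b : ℝ} (ha : 0 ≤ a) (hb : b ≤ 1) :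
    IntegrableOn w (Ioc a b) :=
  hw.mono_set (fun s hs => ⟨lt_of_le_of_lt ha hs.1, hs.2.trans hb⟩)

lemma hw_ii (hw : IntegrableOn w (Ioc (0:ℝ) 1)) {a b : ℝ} (ha : 0 ≤ a) (hab : a ≤ b) (hb : b ≤ 1) :
    IntervalIntegrable w volume a b := by
  rw [intervalIntegrable_iff_integrableOn_Ioc_of_le hab]
  exact hwab hw ha hb

lemma Mw_mono (hw : IntegrableOn w (Ioc (0:ℝ) 1)) (hw0 : ∀ s, 0 ≤ w s)
    {a b : ℝ} (ha : 0 ≤ a) (hab : a ≤ b) (hb : b ≤ 1) :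
    (∫ s in (0:ℝ)..a, w s) ≤ ∫ s in (0:ℝ)..b, w s := by
  have h1 := intervalIntegral.integral_add_adjacent_intervals
    (hw_ii hw le_rfl ha (hab.trans hb)) (hw_ii hw ha hab hb)
  rw [← h1]
  have : 0 ≤ ∫ s in a..b, w s :=
    intervalIntegral.integral_nonneg hab (fun s _ => hw0 s)
  linarith

lemma Mw_nonneg (hw0 : ∀ s, 0 ≤ w s) {t : ℝ} (ht : 0 ≤ t) :
    0 ≤ ∫ s in (0:ℝ)..t, w s :=
  intervalIntegral.integral_nonneg ht (fun s _ => hw0 s)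

lemma Mw_contOn (hw : IntegrableOn w (Ioc (0:ℝ) 1)) :
    ContinuousOn (fun t => ∫ s in (0:ℝ)..t, w s) (Icc (0:ℝ) 1) := by
  have : IntegrableOn w (uIcc (0:ℝ) 1) := by
    rw [uIcc_of_le zero_le_one, integrableOn_Icc_iff_integrableOn_Ioc]
    exact hw
  simpa [uIcc_of_le (zero_le_one' ℝ)] using intervalIntegral.continuousOn_primitive_interval this

lemma wMn_integrableOn (hw : IntegrableOn w (Ioc (0:ℝ) 1)) (hw0 : ∀ s, 0 ≤ w s) (n : ℕ)
    {a b : ℝ} (ha : 0 ≤ a) (hb : b ≤ 1) :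
    IntegrableOn (fun s => w s * (∫ u in (0:ℝ)..s, w u) ^ n) (Ioc a b) := by
  rcases le_or_gt b a with hab | hab
  · rw [Ioc_eq_empty (by exact fun h => absurd h (not_lt.2 hab))]
    simp [integrableOn_empty]
  set M : ℝ → ℝ := fun t => ∫ s in (0:ℝ)..t, w s with hM
  have hmeas : AEStronglyMeasurable (fun s => w s * M s ^ n) (volume.restrict (Ioc a b)) := by
    refine AEStronglyMeasurable.mul ?_ ?_
    · exact (hwab hw ha hb).aestronglyMeasurable
    · refine (ContinuousOn.aestronglyMeasurable ?_ measurableSet_Ioc)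
      refine ContinuousOn.pow ?_ n
      exact (Mw_contOn hw).mono (fun s hs => ⟨ha.trans hs.1.le, hs.2.trans hb⟩)
  refine Integrable.mono' ((hwab hw ha hb).mul_const ((M 1) ^ n)) hmeas ?_
  refine (ae_restrict_iff' measurableSet_Ioc).2 (ae_of_all _ fun s hs => ?_)
  have h0s : 0 ≤ s := ha.trans hs.1.le
  have hMs : 0 ≤ M s := Mw_nonneg hw0 h0s
  rw [Real.norm_eq_abs, abs_mul, _root_.abs_of_nonneg (hw0 s), _root_.abs_of_nonneg (by positivity)]
  refine mul_le_mul_of_nonneg_left ?_ (hw0 s)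
  exact pow_le_pow_left₀ hMs (Mw_mono hw hw0 h0s (hs.2.trans hb) le_rfl) n

lemma key_identity (hw : IntegrableOn w (Ioc (0:ℝ) 1)) (hw0 : ∀ s, 0 ≤ w s) :
    ∀ n : ℕ, ∀ t ∈ Icc (0:ℝ) 1,
      (∫ s in (0:ℝ)..t, w s * (∫ u in (0:ℝ)..s, w u) ^ n)
        = (∫ s in (0:ℝ)..t, w s) ^ (n + 1) / (n + 1) := by
  intro n
  induction n with
  | zero => intro t ht; simp
  | succ n IH =>
    rintro t ⟨ht0, ht1⟩
    set M : ℝ → ℝ := fun r => ∫ s in (0:ℝ)..r, w s with hMdef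
    set B : ℝ → ℝ := fun r => ∫ s in (0:ℝ)..r, w s * M s ^ n with hBdef
    have hIoc_sub : Ioc (0:ℝ) t ⊆ Icc (0:ℝ) 1 := fun s hs => ⟨hs.1.le, hs.2.trans ht1⟩
    -- the two-variable function
    set f : ℝ → ℝ → ℝ := fun s u => (Iic s).indicator w u * (w s * M s ^ n) with hfdef
    -- Step 1 : rewrite the integrand using an inner integral
    have step1 : ∀ s ∈ Ioc (0:ℝ) t,
        w s * M s ^ (n + 1) = ∫ u in Ioc (0:ℝ) t, f s u := by
      intro s hs
      have : ∫ u in Ioc (0:ℝ) t, f s u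
          = (∫ u in Ioc (0:ℝ) t, (Iic s).indicator w u) * (w s * M s ^ n) := by
        rw [integral_mul_const]
      rw [this, setIntegral_indicator measurableSet_Iic]
      have hinter : Ioc (0:ℝ) t ∩ Iic s = Ioc 0 s := by
        rw [Ioc_inter_Iic, inf_eq_right.2 hs.2]
      rw [hinter, ← intervalIntegral.integral_of_le hs.1.le]
      show w s * M s ^ (n+1) = M s * (w s * M s ^ n)
      ring
    have hA1 : (∫ s in (0:ℝ)..t, w s * M s ^ (n+1))
        = ∫ s in Ioc (0:ℝ) t, ∫ u in Ioc (0:ℝ) t, f s u := by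
      rw [intervalIntegral.integral_of_le ht0]
      exact setIntegral_congr_fun measurableSet_Ioc step1
    -- Step 2 : integrability on the product
    have hindic : (fun p : ℝ × ℝ => (Iic p.1).indicator w p.2)
        = {q : ℝ × ℝ | q.2 ≤ q.1}.indicator (fun q => w q.2) := by
      funext p
      by_cases h : p.2 ≤ p.1 <;> simp [Set.indicator_apply, h]
    have hsetm : MeasurableSet {q : ℝ × ℝ | q.2 ≤ q.1} :=
      measurableSet_le measurable_snd measurable_fst
    have hprodm : ((volume.restrict (Ioc (0:ℝ) t)).prod (volume.restrict (Ioc (0:ℝ) t)))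
        = (volume.prod volume).restrict (Ioc (0:ℝ) t ×ˢ Ioc (0:ℝ) t) :=
      Measure.prod_restrict _ _
    have hint : Integrable (Function.uncurry f)
        ((volume.restrict (Ioc (0:ℝ) t)).prod (volume.restrict (Ioc (0:ℝ) t))) := by
      have hwt : IntegrableOn w (Ioc (0:ℝ) t) := hwab hw le_rfl ht1
      have haesm : AEStronglyMeasurable (Function.uncurry f)
          ((volume.restrict (Ioc (0:ℝ) t)).prod (volume.restrict (Ioc (0:ℝ) t))) := by
        have h1 : AEStronglyMeasurable (fun p : ℝ × ℝ => (Iic p.1).indicator w p.2)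
            ((volume.restrict (Ioc (0:ℝ) t)).prod (volume.restrict (Ioc (0:ℝ) t))) := by
          rw [hindic]
          exact (hwt.aestronglyMeasurable.comp_snd).indicator hsetm
        have h2 : AEStronglyMeasurable (fun p : ℝ × ℝ => w p.1)
            ((volume.restrict (Ioc (0:ℝ) t)).prod (volume.restrict (Ioc (0:ℝ) t))) :=
          hwt.aestronglyMeasurable.comp_fst
        have h3 : AEStronglyMeasurable (fun p : ℝ × ℝ => M p.1 ^ n)
            ((volume.restrict (Ioc (0:ℝ) t)).prod (volume.restrict (Ioc (0:ℝ) t))) := by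
          rw [hprodm]
          refine ContinuousOn.aestronglyMeasurable ?_ (measurableSet_Ioc.prod measurableSet_Ioc)
          refine ContinuousOn.pow ?_ n
          refine ContinuousOn.comp ((Mw_contOn hw).mono hIoc_sub)
            continuous_fst.continuousOn ?_
          exact fun p hp => hp.1
        exact h1.mul (h2.mul h3)
      refine Integrable.mono' (((hwt.mul_prod hwt)).const_mul (M 1 ^ n)) haesm ?_
      rw [hprodm]
      refine (ae_restrict_iff' (measurableSet_Ioc.prod measurableSet_Ioc)).2
        (ae_of_all _ fun p hp => ?_)
      obtain ⟨hp1, hp2⟩ := hp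
      have h01 : 0 ≤ M p.1 := Mw_nonneg hw0 hp1.1.le
      have hM1 : M p.1 ^ n ≤ M 1 ^ n :=
        pow_le_pow_left₀ h01 (Mw_mono hw hw0 hp1.1.le (hp1.2.trans ht1) le_rfl) n
      show ‖(Iic p.1).indicator w p.2 * (w p.1 * M p.1 ^ n)‖ ≤ M 1 ^ n * (w p.1 * w p.2)
      by_cases h : p.2 ≤ p.1
      · rw [Set.indicator_apply, if_pos (mem_Iic.2 h)]
        rw [Real.norm_eq_abs,
          _root_.abs_of_nonneg (mul_nonneg (hw0 p.2) (mul_nonneg (hw0 p.1) (pow_nonneg h01 n)))]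
        calc w p.2 * (w p.1 * M p.1 ^ n) ≤ w p.2 * (w p.1 * M 1 ^ n) := by
              have := mul_le_mul_of_nonneg_left hM1 (hw0 p.1)
              exact mul_le_mul_of_nonneg_left this (hw0 p.2)
          _ = M 1 ^ n * (w p.1 * w p.2) := by ring
      · rw [Set.indicator_apply, if_neg (fun hc => h (mem_Iic.1 hc))]
        simp only [zero_mul, norm_zero]
        have h0M : (0:ℝ) ≤ M 1 := Mw_nonneg hw0 zero_le_one
        exact mul_nonneg (pow_nonneg h0M n) (mul_nonneg (hw0 p.1) (hw0 p.2))
    -- Step 3 : Fubini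
    have hswap := MeasureTheory.integral_integral_swap hint
    -- Step 4 : compute the inner integral after swapping
    have step4 : ∀ u ∈ Ioc (0:ℝ) t,
        (∫ s in Ioc (0:ℝ) t, f s u) = w u * (B t - B u) := by
      intro u hu
      have hcong : ∀ s ∈ Ioc (0:ℝ) t,
          f s u = (Ici u).indicator (fun s => w u * (w s * M s ^ n)) s := by
        intro s _
        by_cases h : u ≤ s <;> simp [hfdef, Set.indicator_apply, h]
      rw [setIntegral_congr_fun measurableSet_Ioc hcong,
        setIntegral_indicator measurableSet_Ici]
      have hinter : Ioc (0:ℝ) t ∩ Ici u = Icc u t := by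
        ext s
        simp only [mem_inter_iff, mem_Ioc, mem_Icc, mem_Ici]
        exact ⟨fun ⟨⟨_, h2⟩, h3⟩ => ⟨h3, h2⟩, fun ⟨h1, h2⟩ => ⟨⟨hu.1.trans_le h1, h2⟩, h1⟩⟩
      rw [hinter, integral_Icc_eq_integral_Ioc, integral_const_mul,
        ← intervalIntegral.integral_of_le hu.2]
      have hii1 : IntervalIntegrable (fun s => w s * M s ^ n) volume 0 u := by
        rw [intervalIntegrable_iff_integrableOn_Ioc_of_le hu.1.le]
        exact wMn_integrableOn hw hw0 n le_rfl (hu.2.trans ht1)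
      have hii2 : IntervalIntegrable (fun s => w s * M s ^ n) volume u t := by
        rw [intervalIntegrable_iff_integrableOn_Ioc_of_le hu.2]
        exact wMn_integrableOn hw hw0 n hu.1.le ht1
      have := intervalIntegral.integral_add_adjacent_intervals hii1 hii2
      have hBt : (∫ s in u..t, w s * M s ^ n) = B t - B u := by
        rw [hBdef]
        simp only
        linarith [this]
      rw [hBt]
    -- Step 5 : put it together
    have hA2 : (∫ s in (0:ℝ)..t, w s * M s ^ (n+1))
        = ∫ u in Ioc (0:ℝ) t, w u * (B t - B u) := by
      rw [hA1, hswap]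
      exact setIntegral_congr_fun measurableSet_Ioc step4
    -- use IH to replace B
    have hBv : ∀ r ∈ Icc (0:ℝ) 1, B r = M r ^ (n + 1) / (n + 1) := fun r hr => IH r hr
    have hA3 : (∫ s in (0:ℝ)..t, w s * M s ^ (n+1))
        = ∫ u in Ioc (0:ℝ) t, (w u * B t - w u * (M u ^ (n+1) / (n+1))) := by
      rw [hA2]
      refine setIntegral_congr_fun measurableSet_Ioc fun u hu => ?_
      rw [hBv u (hIoc_sub hu)]
      ring
    have hint1 : IntegrableOn (fun u => w u * B t) (Ioc (0:ℝ) t) :=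
      (hwab hw le_rfl ht1).mul_const _
    have hint2 : IntegrableOn (fun u => w u * (M u ^ (n+1) / (n+1))) (Ioc (0:ℝ) t) := by
      have := (wMn_integrableOn hw hw0 (n+1) (le_refl (0:ℝ)) ht1).div_const ((n:ℝ)+1)
      refine this.congr (Filter.Eventually.of_forall fun u => ?_)
      push_cast
      ring
    have e1 : (∫ u in Ioc (0:ℝ) t, w u * B t) = M t * B t := by
      rw [integral_mul_const, ← intervalIntegral.integral_of_le ht0]
    have e2 : (∫ u in Ioc (0:ℝ) t, w u * (M u ^ (n+1) / ((n:ℝ)+1)))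
        = (∫ s in (0:ℝ)..t, w s * M s ^ (n+1)) / ((n:ℝ)+1) := by
      rw [intervalIntegral.integral_of_le ht0, ← integral_div]
      refine integral_congr_ae (ae_of_all _ fun u => ?_)
      ring
    have hA4 : (∫ s in (0:ℝ)..t, w s * M s ^ (n+1))
        = M t * B t - (∫ s in (0:ℝ)..t, w s * M s ^ (n+1)) / ((n:ℝ)+1) :=
      hA3.trans ((integral_sub hint1 hint2).trans (by rw [e1, e2]))
    -- solve the linear equation
    have hBt' : B t = M t ^ (n + 1) / (n + 1) := hBv t ⟨ht0, ht1⟩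
    set A := ∫ s in (0:ℝ)..t, w s * M s ^ (n+1) with hAdef
    have hn1 : ((n:ℝ) + 1) ≠ 0 := by positivity
    have hn2 : ((n:ℝ) + 1 + 1) ≠ 0 := by positivity
    rw [hBt'] at hA4
    have hpow : M t * (M t ^ (n + 1) / ((n:ℝ)+1)) = M t ^ (n + 2) / ((n:ℝ)+1) := by
      rw [eq_div_iff hn1]
      field_simp
      ring
    rw [hpow] at hA4
    have hfinal : A * ((n:ℝ) + 2) = M t ^ (n + 2) := by
      field_simp at hA4
      linarith
    push_cast
    rw [eq_div_iff hn2]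
    have h22 : (n + 1 + 1) = n + 2 := rfl
    rw [h22]
    linarith

lemma cauchy_schwarz_simple (hw : IntegrableOn w (Ioc (0:ℝ) 1)) (hw0 : ∀ s, 0 ≤ w s)
    (hw2 : IntegrableOn (fun s => w s ^ 2) (Ioc (0:ℝ) 1)) :
    (∫ s in Ioc (0:ℝ) 1, w s) ≤ Real.sqrt (∫ s in Ioc (0:ℝ) 1, w s ^ 2) := by
  set I := ∫ s in Ioc (0:ℝ) 1, w s ^ 2 with hI
  have hI0 : 0 ≤ I := setIntegral_nonneg measurableSet_Ioc fun s _ => sq_nonneg _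
  have hvol : (volume (Ioc (0:ℝ) 1)).toReal = 1 := by
    rw [Real.volume_Ioc]
    norm_num
  rcases eq_or_lt_of_le hI0 with h0 | hpos
  · -- I = 0 : w = 0 a.e.
    have hw2z : (fun s => w s ^ 2) =ᵐ[volume.restrict (Ioc (0:ℝ) 1)] 0 :=
      (integral_eq_zero_iff_of_nonneg_ae (ae_of_all _ fun s => sq_nonneg (w s)) hw2).1 h0.symm
    have hwz : w =ᵐ[volume.restrict (Ioc (0:ℝ) 1)] 0 := by
      filter_upwards [hw2z] with s hs
      have : w s ^ 2 = 0 := hs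
      simpa using pow_eq_zero_iff (n := 2) (by norm_num)  |>.1 this
    rw [integral_congr_ae hwz]
    simp [Real.sqrt_nonneg]
  · set c := Real.sqrt I with hc
    have hc0 : 0 < c := Real.sqrt_pos.2 hpos
    have hpt : ∀ s, w s ≤ w s ^ 2 / (2 * c) + c / 2 := by
      intro s
      rw [div_add_div _ _ (by positivity) (two_ne_zero), le_div_iff₀ (by positivity)]
      nlinarith [sq_nonneg (w s - c)]
    have hint : Integrable (fun s => w s ^ 2 / (2 * c) + c / 2)
        (volume.restrict (Ioc (0:ℝ) 1)) := by
      refine (hw2.div_const _).add (integrable_const _)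
    calc (∫ s in Ioc (0:ℝ) 1, w s) ≤ ∫ s in Ioc (0:ℝ) 1, (w s ^ 2 / (2 * c) + c / 2) :=
          integral_mono hw hint hpt
      _ = I / (2 * c) + c / 2 := by
          rw [integral_add (hw2.div_const _) (integrable_const _), integral_div,
            setIntegral_const, measureReal_def, hvol]
          simp [hI]
      _ = c := by
          rw [show I = c ^ 2 from (Real.sq_sqrt hI0).symm]
          field_simp
          ring

end Scalar

/-- Bounds on the Picard iterates `yₙ`, and absolute convergence of the series
`y = Σ yₙ` with the bound `‖y(x,λ)‖ ≤ e^{x|Im λ| + ‖v‖}`. -/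
theorem statement3 (v₁ v₂ : ℝ → ℂ) (lam : ℂ)
    (hv : IntegrableOn (fun s => Real.sqrt (‖v₁ s‖ ^ 2 + ‖v₂ s‖ ^ 2)) (Set.Ioc (0:ℝ) 1))
    (y : ℕ → ℝ → Matrix (Fin 3) (Fin 3) ℂ)
    (hy0 : ∀ x : ℝ, y 0 x = NormedSpace.exp ((-(Complex.I * lam * x)) • Jmat))
    (hyn : ∀ (n : ℕ) (x : ℝ), y (n + 1) x = Complex.I •
      ∫ s in (0:ℝ)..x,
        NormedSpace.exp ((Complex.I * lam * (s - x)) • Jmat) *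
          (Jmat * (Vmat (v₁ s) (v₂ s) * y n s))) :
    (∀ (n : ℕ), ∀ x ∈ Set.Icc (0:ℝ) 1,
      opNorm (y n x) ≤ Real.exp (x * |lam.im|) *
        (∫ s in (0:ℝ)..x, Real.sqrt (‖v₁ s‖ ^ 2 + ‖v₂ s‖ ^ 2)) ^ n / n.factorial) ∧
    ((MemLp v₁ 2 (volume.restrict (Set.Ioc (0:ℝ) 1)) ∧
      MemLp v₂ 2 (volume.restrict (Set.Ioc (0:ℝ) 1))) →
      ∀ x ∈ Set.Icc (0:ℝ) 1,
        (∀ n : ℕ, opNorm (y n x) ≤ Real.exp (x * |lam.im|) *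
          Real.sqrt (∫ s in (0:ℝ)..1, (‖v₁ s‖ ^ 2 + ‖v₂ s‖ ^ 2)) ^ n / n.factorial) ∧
        Summable (fun n : ℕ => opNorm (y n x)) ∧
        opNorm (∑' n : ℕ, y n x) ≤
          Real.exp (x * |lam.im| + Real.sqrt (∫ s in (0:ℝ)..1, (‖v₁ s‖ ^ 2 + ‖v₂ s‖ ^ 2)))) := by
  set w : ℝ → ℝ := fun s => Real.sqrt (‖v₁ s‖ ^ 2 + ‖v₂ s‖ ^ 2) with hwdef
  have hw : IntegrableOn w (Set.Ioc (0:ℝ) 1) := hv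
  have hw0 : ∀ s, 0 ≤ w s := fun s => Real.sqrt_nonneg _
  set M : ℝ → ℝ := fun t => ∫ s in (0:ℝ)..t, w s with hMdef
  have part1 : ∀ (n : ℕ), ∀ x ∈ Set.Icc (0:ℝ) 1,
      opNorm (y n x) ≤ Real.exp (x * |lam.im|) * M x ^ n / n.factorial := by
    intro n
    induction n with
    | zero =>
      rintro x ⟨hx0, hx1⟩
      rw [hy0]
      have h := opNorm_exp_smul_J (-(Complex.I * lam * x))
      have hre : (-(Complex.I * lam * (x:ℂ))).re = lam.im * x := by
        simp [Complex.mul_re]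
      rw [hre] at h
      have habs : |lam.im * x| = x * |lam.im| := by
        rw [abs_mul, _root_.abs_of_nonneg hx0, mul_comm]
      rw [habs] at h
      simpa using h
    | succ n IH =>
      rintro x ⟨hx0, hx1⟩
      rw [hyn n x, opNorm_smul, Complex.norm_I, one_mul]
      set C : ℝ := Real.exp (x * |lam.im|) / n.factorial with hC
      have hgint : IntegrableOn (fun s => C * (w s * M s ^ n)) (Set.Ioc 0 x) :=
        (wMn_integrableOn hw hw0 n le_rfl hx1).const_mul C
      have hbound : ∀ s ∈ Set.Ioc (0:ℝ) x,
          opNorm (NormedSpace.exp ((Complex.I * lam * ((s:ℂ) - (x:ℂ))) • Jmat) *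
            (Jmat * (Vmat (v₁ s) (v₂ s) * y n s))) ≤ C * (w s * M s ^ n) := by
        intro s hs
        have hsx : s ≤ x := hs.2
        have hE : opNorm (NormedSpace.exp ((Complex.I * lam * ((s:ℂ) - (x:ℂ))) • Jmat))
            ≤ Real.exp ((x - s) * |lam.im|) := by
          have h := opNorm_exp_smul_J (Complex.I * lam * ((s:ℂ) - (x:ℂ)))
          have hre : (Complex.I * lam * ((s:ℂ) - (x:ℂ))).re = -lam.im * (s - x) := by
            rw [← Complex.ofReal_sub]
            simp [Complex.mul_re]
          rw [hre] at h
          have habs : |(-lam.im) * (s - x)| = (x - s) * |lam.im| := by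
            rw [abs_mul, abs_neg, _root_.abs_of_nonpos (sub_nonpos.2 hsx)]
            ring
          rwa [habs] at h
        have hV : opNorm (Vmat (v₁ s) (v₂ s)) ≤ w s := opNorm_V_le (v₁ s) (v₂ s)
        have hy : opNorm (y n s) ≤ Real.exp (s * |lam.im|) * M s ^ n / n.factorial :=
          IH s ⟨hs.1.le, hs.2.trans hx1⟩
        have h1 : opNorm (Vmat (v₁ s) (v₂ s) * y n s)
            ≤ w s * (Real.exp (s * |lam.im|) * M s ^ n / n.factorial) :=
          (opNorm_mul_le _ _).trans
            (mul_le_mul hV hy (opNorm_nonneg _) (hw0 s))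
        have h2 : opNorm (Jmat * (Vmat (v₁ s) (v₂ s) * y n s))
            ≤ w s * (Real.exp (s * |lam.im|) * M s ^ n / n.factorial) := by
          refine (opNorm_mul_le _ _).trans ?_
          have := mul_le_mul opNorm_J_le h1 (opNorm_nonneg _) zero_le_one
          rwa [one_mul] at this
        have h3 : opNorm (NormedSpace.exp ((Complex.I * lam * ((s:ℂ) - (x:ℂ))) • Jmat) *
              (Jmat * (Vmat (v₁ s) (v₂ s) * y n s)))
            ≤ Real.exp ((x - s) * |lam.im|) *
              (w s * (Real.exp (s * |lam.im|) * M s ^ n / n.factorial)) :=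
          (opNorm_mul_le _ _).trans
            (mul_le_mul hE h2 (opNorm_nonneg _) (Real.exp_nonneg _))
        refine h3.trans_eq ?_
        calc Real.exp ((x - s) * |lam.im|) *
              (w s * (Real.exp (s * |lam.im|) * M s ^ n / n.factorial))
            = (Real.exp ((x - s) * |lam.im|) * Real.exp (s * |lam.im|)) *
              (w s * M s ^ n) / n.factorial := by ring
          _ = Real.exp (x * |lam.im|) * (w s * M s ^ n) / n.factorial := by
              rw [← Real.exp_add, show (x - s) * |lam.im| + s * |lam.im| = x * |lam.im| by ring]
          _ = C * (w s * M s ^ n) := by rw [hC]; ring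
      refine (opNorm_integral_le hx0 _ _ hgint hbound).trans_eq ?_
      rw [intervalIntegral.integral_const_mul]
      rw [key_identity hw hw0 n x ⟨hx0, hx1⟩]
      rw [hC, Nat.factorial_succ, div_mul_div_comm]
      push_cast
      rw [mul_comm ((n:ℝ) + 1) ((n.factorial : ℕ):ℝ)]
  refine ⟨part1, ?_⟩
  rintro ⟨h1, h2⟩ x hx
  set Q : ℝ := ∫ s in (0:ℝ)..1, (‖v₁ s‖ ^ 2 + ‖v₂ s‖ ^ 2) with hQ
  set K : ℝ := Real.sqrt Q with hKdef
  have hw2 : IntegrableOn (fun s => w s ^ 2) (Set.Ioc (0:ℝ) 1) := by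
    have e : (fun s => w s ^ 2) = fun s => ‖v₁ s‖ ^ 2 + ‖v₂ s‖ ^ 2 := by
      funext s
      rw [hwdef]
      exact Real.sq_sqrt (by positivity)
    rw [e]
    exact (h1.norm.integrable_sq).add (h2.norm.integrable_sq)
  have hQeq : Q = ∫ s in Set.Ioc (0:ℝ) 1, w s ^ 2 := by
    rw [hQ, intervalIntegral.integral_of_le zero_le_one]
    refine (setIntegral_congr_fun measurableSet_Ioc fun s _ => ?_).symm
    rw [hwdef]
    exact Real.sq_sqrt (by positivity)
  have hM1K : M 1 ≤ K := by
    rw [hMdef, hKdef, hQeq]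
    show (∫ s in (0:ℝ)..1, w s) ≤ _
    rw [intervalIntegral.integral_of_le zero_le_one]
    exact cauchy_schwarz_simple hw hw0 hw2
  have hMK : ∀ r ∈ Set.Icc (0:ℝ) 1, M r ≤ K := fun r hr =>
    (Mw_mono hw hw0 hr.1 hr.2 le_rfl).trans hM1K
  have hK0 : 0 ≤ K := Real.sqrt_nonneg _
  set c : ℕ → ℝ := fun n => Real.exp (x * |lam.im|) * K ^ n / n.factorial with hc
  have hb : ∀ n, opNorm (y n x) ≤ c n := by
    intro n
    refine (part1 n x hx).trans ?_
    show Real.exp (x * |lam.im|) * M x ^ n / n.factorial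
      ≤ Real.exp (x * |lam.im|) * K ^ n / n.factorial
    have hMxn : M x ^ n ≤ K ^ n := pow_le_pow_left₀ (Mw_nonneg hw0 hx.1) (hMK x hx) n
    have hnum := mul_le_mul_of_nonneg_left hMxn (Real.exp_nonneg (x * |lam.im|))
    have hfac : (0:ℝ) < n.factorial := by
      exact_mod_cast Nat.cast_pos.2 n.factorial_pos
    exact (div_le_div_iff_of_pos_right hfac).2 hnum
  have hcsum : Summable c := by
    have := (Real.summable_pow_div_factorial K).mul_left (Real.exp (x * |lam.im|))
    refine this.congr fun n => ?_
    exact (mul_div_assoc (Real.exp (x * |lam.im|)) (K ^ n) ((n.factorial : ℕ):ℝ)).symm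
  obtain ⟨hsum, hts⟩ := summable_and_opNorm_tsum_le (fun n => y n x) c hcsum hb
  refine ⟨hb, hsum, hts.trans ?_⟩
  have htsum : ∑' n : ℕ, c n = Real.exp (x * |lam.im|) * Real.exp K := by
    calc ∑' n : ℕ, c n
        = ∑' n : ℕ, Real.exp (x * |lam.im|) * (K ^ n / ((n.factorial : ℕ):ℝ)) :=
          tsum_congr fun n => mul_div_assoc _ _ _
      _ = Real.exp (x * |lam.im|) * Real.exp K := by
          rw [tsum_mul_left]
          congr 1
          rw [Real.exp_eq_exp_ℝ, NormedSpace.exp_eq_tsum_div]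
  rw [htsum, ← Real.exp_add]
end
end

section
/- Let v : ℝ → ℂ² be continuous, λ ∈ ℂ, and let y : [0,1] → M₃(ℂ) be differentiable with y(0) = 𝟙₃ and iJ·y′(x) + V(v(x))·y(x) = λ·y(x) for all x ∈ [0,1]. Then det y(x) = e^{iλx} for every x ∈ [0,1]. -/
open MeasureTheory Complex Matrix

attribute [local instance] Matrix.normedAddCommGroup Matrix.normedSpace

noncomputable section

lemma aux_solve (a b : ℂ) (h : Complex.I * a = b) : a = -Complex.I * b := by
  subst h; rw [neg_mul, ← mul_assoc, Complex.I_mul_I]; ring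

/-- If `y` solves `iJ·y′ + V(v)·y = λ·y` on `[0,1]` with `y(0) = 𝟙₃`, then
`det y(x) = e^{iλx}` for all `x ∈ [0,1]`. -/
theorem statement4 (v₁ v₂ : ℝ → ℂ) (hv₁ : Continuous v₁) (hv₂ : Continuous v₂) (lam : ℂ)
    (y y' : ℝ → Matrix (Fin 3) (Fin 3) ℂ)
    (hderiv : ∀ x ∈ Set.Icc (0:ℝ) 1, HasDerivAt y (y' x) x)
    (h0 : y 0 = 1)
    (hode : ∀ x ∈ Set.Icc (0:ℝ) 1,
      Complex.I • (Jmat * y' x) + Vmat (v₁ x) (v₂ x) * y x = lam • y x) :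
    ∀ x ∈ Set.Icc (0:ℝ) 1, (y x).det = Complex.exp (Complex.I * lam * x) := by
  -- entrywise derivatives
  have hent : ∀ x ∈ Set.Icc (0:ℝ) 1, ∀ i j, HasDerivAt (fun t => y t i j) (y' x i j) x := by
    intro x hx i j
    exact hasDerivAt_pi.1 (hasDerivAt_pi.1 (hderiv x hx) i) j
  -- derivative of the determinant
  have hD : ∀ x ∈ Set.Icc (0:ℝ) 1,
      HasDerivAt (fun t => (y t).det) (Complex.I * lam * (y x).det) x := by
    intro x hx
    have hE : ∀ i j, Complex.I * (![1,-1,-1] i * y' x i j)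
        + (Vmat (v₁ x) (v₂ x) * y x) i j = lam * y x i j := by
      intro i j
      have h := congrFun (congrFun (hode x hx) i) j
      simpa [Jmat, Matrix.add_apply, Matrix.smul_apply, Matrix.diagonal_mul,
        smul_eq_mul] using h
    have hV : ∀ i j, (Vmat (v₁ x) (v₂ x) * y x) i j =
        ![(starRingEnd ℂ) (v₁ x) * y x 1 j + (starRingEnd ℂ) (v₂ x) * y x 2 j,
          v₁ x * y x 0 j, v₂ x * y x 0 j] i := by
      intro i j
      fin_cases i <;>
        simp [Vmat, Matrix.mul_apply, Fin.sum_univ_three]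
    have e0 : ∀ j, y' x 0 j = -Complex.I * (lam * y x 0 j
        - (starRingEnd ℂ) (v₁ x) * y x 1 j - (starRingEnd ℂ) (v₂ x) * y x 2 j) := by
      intro j
      apply aux_solve
      have h := hE 0 j; rw [hV 0 j] at h
      simp only [Matrix.cons_val_zero] at h ⊢
      linear_combination h
    have e1 : ∀ j, y' x 1 j = -Complex.I * (v₁ x * y x 0 j - lam * y x 1 j) := by
      intro j
      apply aux_solve
      have h := hE 1 j; rw [hV 1 j] at h
      simp only [Matrix.cons_val_one, Matrix.head_cons, Matrix.cons_val_zero] at h ⊢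
      linear_combination -h
    have e2 : ∀ j, y' x 2 j = -Complex.I * (v₂ x * y x 0 j - lam * y x 2 j) := by
      intro j
      apply aux_solve
      have h := hE 2 j; rw [hV 2 j] at h
      simp only [Matrix.cons_val_two, Matrix.tail_cons, Matrix.head_cons] at h ⊢
      linear_combination -h
    have h := hent x hx
    have big := (((((((h 0 0).mul (h 1 1)).mul (h 2 2)).sub
        (((h 0 0).mul (h 1 2)).mul (h 2 1))).sub
        (((h 0 1).mul (h 1 0)).mul (h 2 2))).add
        (((h 0 1).mul (h 1 2)).mul (h 2 0))).add
        (((h 0 2).mul (h 1 0)).mul (h 2 1))).sub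
        (((h 0 2).mul (h 1 1)).mul (h 2 0))
    simp only [Matrix.det_fin_three]
    refine big.congr_deriv ?_
    rw [e0 0, e0 1, e0 2, e1 0, e1 1, e1 2, e2 0, e2 1, e2 2]
    simp only [Pi.mul_apply]
    ring
  -- the auxiliary function g
  set g : ℝ → ℂ := fun t => Complex.exp (-(Complex.I * lam * t)) * (y t).det with hg_def
  have hg : ∀ x ∈ Set.Icc (0:ℝ) 1, HasDerivAt g 0 x := by
    intro x hx
    have hr : HasDerivAt (fun t : ℝ => (t : ℂ)) 1 x := by
      exact Complex.ofRealCLM.hasDerivAt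
    have h1 : HasDerivAt (fun t : ℝ => -(Complex.I * lam * t))
        (-(Complex.I * lam)) x := by
      exact (hr.const_mul (Complex.I * lam)).neg.congr_deriv (by ring)
    have h2 := h1.cexp.mul (hD x hx)
    refine h2.congr_deriv ?_
    ring
  have hcont : ContinuousOn g (Set.Icc 0 1) :=
    fun x hx => (hg x hx).continuousAt.continuousWithinAt
  have hconst := constant_of_has_deriv_right_zero hcont
    (fun x hx => (hg x (Set.mem_Icc_of_Ico hx)).hasDerivWithinAt)
  intro x hx
  have hx0 := hconst x hx
  have hg0 : g 0 = 1 := by simp [hg_def, h0]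
  rw [hg0, hg_def] at hx0
  simp only at hx0
  rw [Complex.exp_neg] at hx0
  field_simp at hx0
  exact hx0
end
end

section
/- Let v : ℝ → ℂ² be continuous and suppose that for every λ ∈ ℂ a differentiable matrix function y(·,λ) : [0,1] → M₃(ℂ) is given with y(0,λ) = 𝟙₃ and iJ·∂ₓy(x,λ) + V(v(x))·y(x,λ) = λ·y(x,λ) for all x ∈ [0,1]. Then for all x ∈ [0,1] and λ ∈ ℂ the Wronskian identity y(x, conj λ)* · J · y(x,λ) = J holds; in particular, y(x,λ) is invertible and y(x,λ)⁻¹ = J · y(x, conj λ)* · J. -/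
open MeasureTheory Complex Matrix

attribute [local instance] Matrix.normedAddCommGroup Matrix.normedSpace

noncomputable section

lemma hasDerivAt_matrix {A : ℝ → Matrix (Fin 3) (Fin 3) ℂ} {A' : Matrix (Fin 3) (Fin 3) ℂ}
    {x : ℝ} : HasDerivAt A A' x ↔ ∀ i j, HasDerivAt (fun t => A t i j) (A' i j) x := by
  exact hasDerivAt_pi.trans (forall_congr' fun i => hasDerivAt_pi)

lemma HasDerivAt.matmul {A B : ℝ → Matrix (Fin 3) (Fin 3) ℂ}
    {A' B' : Matrix (Fin 3) (Fin 3) ℂ} {x : ℝ}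
    (hA : HasDerivAt A A' x) (hB : HasDerivAt B B' x) :
    HasDerivAt (fun t => A t * B t) (A' * B x + A x * B' ) x := by
  rw [hasDerivAt_matrix] at *
  intro i j
  simp only [Matrix.mul_apply, Matrix.add_apply]
  have : ∀ k : Fin 3, HasDerivAt (fun t => A t i k * B t k j)
      (A' i k * B x k j + A x i k * B' k j) x := fun k => (hA i k).mul (hB k j)
  simpa [Finset.sum_add_distrib] using HasDerivAt.fun_sum (fun k _ => this k)

lemma HasDerivAt.matCT {A : ℝ → Matrix (Fin 3) (Fin 3) ℂ}
    {A' : Matrix (Fin 3) (Fin 3) ℂ} {x : ℝ} (hA : HasDerivAt A A' x) :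
    HasDerivAt (fun t => (A t)ᴴ) A'ᴴ x := by
  rw [hasDerivAt_matrix] at *
  intro i j
  exact (hA j i).star

lemma Jmat_CT : Jmatᴴ = Jmat := by
  ext i j
  fin_cases i <;> fin_cases j <;> simp [Jmat, Matrix.conjTranspose_apply, Matrix.diagonal_apply]

lemma Jmat_sq : Jmat * Jmat = 1 := by
  ext i j
  fin_cases i <;> fin_cases j <;>
    simp [Jmat, Matrix.mul_apply, Matrix.diagonal_apply, Fin.sum_univ_three, Matrix.one_apply]

lemma Vmat_CT (a₁ a₂ : ℂ) : (Vmat a₁ a₂)ᴴ = Vmat a₁ a₂ := by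
  ext i j
  fin_cases i <;> fin_cases j <;> simp [Vmat, Matrix.conjTranspose_apply, Matrix.vecHead, Matrix.vecTail]

/-- Wronskian identity: `y(x, conj λ)* · J · y(x,λ) = J`; in particular `y(x,λ)` is
invertible with inverse `J · y(x, conj λ)* · J`. -/
theorem statement5 (v₁ v₂ : ℝ → ℂ) (hv₁ : Continuous v₁) (hv₂ : Continuous v₂)
    (y y' : ℝ → ℂ → Matrix (Fin 3) (Fin 3) ℂ)
    (hderiv : ∀ (lam : ℂ), ∀ x ∈ Set.Icc (0:ℝ) 1,
      HasDerivAt (fun t => y t lam) (y' x lam) x)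
    (h0 : ∀ lam : ℂ, y 0 lam = 1)
    (hode : ∀ (lam : ℂ), ∀ x ∈ Set.Icc (0:ℝ) 1,
      Complex.I • (Jmat * y' x lam) + Vmat (v₁ x) (v₂ x) * y x lam = lam • y x lam) :
    ∀ (lam : ℂ), ∀ x ∈ Set.Icc (0:ℝ) 1,
      (y x ((starRingEnd ℂ) lam))ᴴ * Jmat * y x lam = Jmat ∧
      IsUnit (y x lam) ∧
      y x lam * (Jmat * (y x ((starRingEnd ℂ) lam))ᴴ * Jmat) = 1 ∧
      (Jmat * (y x ((starRingEnd ℂ) lam))ᴴ * Jmat) * y x lam = 1 := by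
  intro lam x hx
  set μ := (starRingEnd ℂ) lam with hμ
  -- J * y' = (-I) • (lam • y - V y)
  have key : ∀ (l : ℂ), ∀ t ∈ Set.Icc (0:ℝ) 1,
      Jmat * y' t l = (-Complex.I) • (l • y t l - Vmat (v₁ t) (v₂ t) * y t l) := by
    intro l t ht
    have h := hode l t ht
    have : Complex.I • (Jmat * y' t l) = l • y t l - Vmat (v₁ t) (v₂ t) * y t l := by
      linear_combination (norm := module) h
    calc Jmat * y' t l = (-Complex.I) • (Complex.I • (Jmat * y' t l)) := by
          rw [smul_smul]; norm_num
      _ = (-Complex.I) • (l • y t l - Vmat (v₁ t) (v₂ t) * y t l) := by rw [this]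
  -- The Wronskian is constant
  have hW : ∀ t ∈ Set.Icc (0:ℝ) 1,
      (y t μ)ᴴ * Jmat * y t lam = Jmat := by
    have hconst := constant_of_has_deriv_right_zero
      (f := fun t => (y t μ)ᴴ * Jmat * y t lam) (a := (0:ℝ)) (b := 1)
      (fun t ht => by
        have h1 := (hderiv μ t ht).matCT.matmul (hasDerivAt_const t Jmat)
        have h2 := h1.matmul (hderiv lam t ht)
        exact h2.continuousAt.continuousWithinAt)
      (fun t ht => by
        have ht' : t ∈ Set.Icc (0:ℝ) 1 := Set.mem_Icc_of_Ico ht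
        have h1 := (hderiv μ t ht').matCT.matmul (hasDerivAt_const t Jmat)
        have h2 := h1.matmul (hderiv lam t ht')
        have hz : ((y' t μ)ᴴ * Jmat + (y t μ)ᴴ * 0) * y t lam +
            (y t μ)ᴴ * Jmat * y' t lam = 0 := by
          have e1 : (y' t μ)ᴴ * Jmat = Complex.I • (lam • (y t μ)ᴴ - (y t μ)ᴴ * Vmat (v₁ t) (v₂ t)) := by
            have := congrArg Matrix.conjTranspose (key μ t ht')
            rw [Matrix.conjTranspose_mul, Jmat_CT] at this
            rw [this]
            simp [Matrix.conjTranspose_smul, Matrix.conjTranspose_sub,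
              Matrix.conjTranspose_smul, Matrix.conjTranspose_mul, Vmat_CT, hμ]
          have e2 : (y t μ)ᴴ * Jmat * y' t lam =
              (y t μ)ᴴ * ((-Complex.I) • (lam • y t lam - Vmat (v₁ t) (v₂ t) * y t lam)) := by
            rw [Matrix.mul_assoc, key lam t ht']
          rw [e1, e2]
          simp only [Matrix.mul_zero, add_zero, Matrix.smul_mul, Matrix.mul_smul,
            Matrix.sub_mul, Matrix.mul_sub, smul_sub, Matrix.mul_assoc]
          module
        rw [hz] at h2
        exact h2.hasDerivWithinAt)
    intro t ht
    have h := hconst t ht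
    simp only [h0] at h
    simpa [Jmat_CT] using h
  have hw := hW x hx
  have hleft : (Jmat * (y x μ)ᴴ * Jmat) * y x lam = 1 := by
    calc (Jmat * (y x μ)ᴴ * Jmat) * y x lam
        = Jmat * ((y x μ)ᴴ * Jmat * y x lam) := by
          simp only [Matrix.mul_assoc]
      _ = Jmat * Jmat := by rw [hw]
      _ = 1 := Jmat_sq
  have hright : y x lam * (Jmat * (y x μ)ᴴ * Jmat) = 1 :=
    mul_eq_one_comm.mpr hleft
  exact ⟨hw, ⟨⟨y x lam, Jmat * (y x μ)ᴴ * Jmat, hright, hleft⟩, rfl⟩, hright, hleft⟩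
end
end
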